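/- For any starting digit d ∉ {1,2,4,6} and any n ≥ 2, the n-th term of the look-and-say-again sequence with seed d has the form k ∥ dd, where k is a digit string all of whose runs have base digit in {1,2,4,6} and run length in {2,4,6}, and the digit d does not occur in k. -/

import Mathlib

/-- Run-length encoding of a digit string (a list of digits). -/
def rle : List ℕ → List (ℕ × ℕ)
  | [] => []
  | a :: t =>
    match rle t with
    | [] => [(a, 1)]
    | (b, n) :: r => if a = b then (a, n + 1) :: r else (a, 1) :: (b, n) :: r

/-- `P` is a run-length representation of the digit string `S`:
multiplicities are positive, adjacent base digits are distinct, and `S` is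
the concatenation of the runs. -/
def IsRLE (S : List ℕ) (P : List (ℕ × ℕ)) : Prop :=
  (∀ p ∈ P, 1 ≤ p.2) ∧ List.Chain' (fun p q => p.1 ≠ q.1) P ∧
    S = (P.map fun p => List.replicate p.2 p.1).flatten

/-- The look-and-say-again step: each run `a^n` is read off as `n n a a`. -/
def lsa (T : List ℕ) : List ℕ := (rle T).flatMap fun p => [p.2, p.2, p.1, p.1]

/-- Property `P`: every run has base digit in `{1,2,4,6}` and length in `{2,4,6}`. -/
def propP (T : List ℕ) : Prop :=
  ∀ p ∈ rle T, p.1 ∈ ({1, 2, 4, 6} : Set ℕ) ∧ p.2 ∈ ({2, 4, 6} : Set ℕ)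

namespace LSAAux

def repl (p : ℕ × ℕ) : List ℕ := List.replicate p.2 p.1

def flat (P : List (ℕ × ℕ)) : List ℕ := (P.map repl).flatten

def ne1 (p q : ℕ × ℕ) : Prop := p.1 ≠ q.1

def inA (p : ℕ × ℕ) : Prop :=
  p.1 ∈ ({1, 2, 4, 6} : Set ℕ) ∧ p.2 ∈ ({2, 4, 6} : Set ℕ)

def merAux (p : ℕ × ℕ) : List (ℕ × ℕ) → List (ℕ × ℕ)
  | [] => [p]
  | q :: r => if p.1 = q.1 then (p.1, p.2 + q.2) :: r else p :: q :: r

/-- merge adjacent runs with equal digits -/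
def mer : List (ℕ × ℕ) → List (ℕ × ℕ)
  | [] => []
  | p :: t => merAux p (mer t)

def expand (R : List (ℕ × ℕ)) : List (ℕ × ℕ) :=
  R.flatMap fun p => if p.2 = p.1 then [(p.1, 4)] else [(p.2, 2), (p.1, 2)]

def g (R : List (ℕ × ℕ)) : List (ℕ × ℕ) := mer (expand R ++ [(2, 2)])

lemma flat_nil : flat [] = [] := rfl

lemma flat_cons (p : ℕ × ℕ) (P : List (ℕ × ℕ)) :
    flat (p :: P) = List.replicate p.2 p.1 ++ flat P := rfl

lemma flat_append (P Q : List (ℕ × ℕ)) : flat (P ++ Q) = flat P ++ flat Q := by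
  simp [flat]

lemma mer_cons (p : ℕ × ℕ) (t : List (ℕ × ℕ)) :
    mer (p :: t) = merAux p (mer t) := rfl

lemma mer_flat (P : List (ℕ × ℕ)) : flat (mer P) = flat P := by
  induction P with
  | nil => rfl
  | cons p t ih =>
    rw [mer_cons]
    cases h : mer t with
    | nil =>
      have ht : flat t = [] := by rw [← ih, h, flat_nil]
      simp [merAux, flat_cons, ht, flat_nil]
    | cons q r =>
      rw [merAux]
      have hqr : flat (q :: r) = flat t := by rw [← h, ih]
      by_cases hpq : p.1 = q.1
      · rw [if_pos hpq]
        calc flat ((p.1, p.2 + q.2) :: r)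
            = List.replicate p.2 p.1 ++ (List.replicate q.2 q.1 ++ flat r) := by
              rw [flat_cons, ← hpq, List.replicate_add, List.append_assoc]
          _ = List.replicate p.2 p.1 ++ flat (q :: r) := by rw [← flat_cons]
          _ = List.replicate p.2 p.1 ++ flat t := by rw [hqr]
          _ = flat (p :: t) := (flat_cons _ _).symm
      · rw [if_neg hpq, flat_cons, hqr, ← flat_cons]

lemma mer_chain' (P : List (ℕ × ℕ)) : List.Chain' ne1 (mer P) := by
  induction P with
  | nil => exact List.isChain_nil
  | cons p t ih =>
    rw [mer_cons]
    cases h : mer t with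
    | nil => exact List.isChain_singleton _
    | cons q r =>
      rw [merAux]
      rw [h] at ih
      by_cases hpq : p.1 = q.1
      · rw [if_pos hpq]
        obtain ⟨hq, hr⟩ := List.isChain_cons.1 ih
        exact List.isChain_cons.2 ⟨fun y hy => by
          show p.1 ≠ y.1; rw [hpq]; exact hq y hy, hr⟩
      · rw [if_neg hpq]
        exact List.isChain_cons_cons.2 ⟨hpq, ih⟩

lemma mer_mem_fst (P : List (ℕ × ℕ)) : ∀ q ∈ mer P, ∃ p ∈ P, q.1 = p.1 := by
  induction P with
  | nil => simp [mer]
  | cons p t ih =>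
    rw [mer_cons]
    cases h : mer t with
    | nil =>
      intro q hq
      simp only [merAux, List.mem_singleton] at hq
      exact ⟨p, by simp, by rw [hq]⟩
    | cons q' r =>
      rw [h] at ih
      intro q hq
      by_cases hpq : p.1 = q'.1
      · rw [merAux, if_pos hpq] at hq
        rcases List.mem_cons.1 hq with rfl | hq
        · exact ⟨p, by simp, rfl⟩
        · obtain ⟨x, hx, hx2⟩ := ih q (by simp [hq])
          exact ⟨x, by simp [hx], hx2⟩
      · rw [merAux, if_neg hpq] at hq
        rcases List.mem_cons.1 hq with rfl | hq
        · exact ⟨q, by simp, rfl⟩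
        · obtain ⟨x, hx, hx2⟩ := ih q hq
          exact ⟨x, by simp [hx], hx2⟩

lemma rle_replicate_cons (a : ℕ) : ∀ n L, rle (List.replicate (n + 1) a ++ L) =
    match rle L with
    | [] => [(a, n + 1)]
    | (b, m) :: r => if a = b then (a, m + n + 1) :: r else (a, n + 1) :: (b, m) :: r := by
  intro n
  induction n with
  | zero =>
    intro L
    show rle (a :: L) = _
    rw [rle]
  | succ n ih =>
    intro L
    show rle (a :: (List.replicate (n + 1) a ++ L)) = _
    rw [rle, ih L]
    cases h : rle L with
    | nil => simp
    | cons q r =>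
      cases q with
      | mk b m =>
        by_cases hab : a = b
        · simp [hab]; omega
        · simp [hab]

lemma rle_flat (P : List (ℕ × ℕ)) (h1 : ∀ p ∈ P, 1 ≤ p.2)
    (h2 : List.Chain' ne1 P) : rle (flat P) = P := by
  induction P with
  | nil => rfl
  | cons p t ih =>
    have hn : p.2 = (p.2 - 1) + 1 := by
      have := h1 p (by simp); omega
    have iht : rle (flat t) = t :=
      ih (fun q hq => h1 q (by simp [hq])) h2.tail
    rw [flat_cons, hn, rle_replicate_cons, iht]
    cases t with
    | nil => simp [← hn]
    | cons q r =>
      cases q with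
      | mk b m =>
        have hab : p.1 ≠ b := (List.isChain_cons_cons.1 h2).1
        simp [hab, ← hn]

lemma flatMap_expand (R : List (ℕ × ℕ)) :
    (R.flatMap fun p => [p.2, p.2, p.1, p.1]) = flat (expand R) := by
  induction R with
  | nil => rfl
  | cons p t ih =>
    rw [List.flatMap_cons, ih]
    show _ = flat ((if p.2 = p.1 then [(p.1, 4)] else [(p.2, 2), (p.1, 2)]) ++ expand t)
    rw [flat_append]
    by_cases h : p.2 = p.1
    · simp [h, flat_cons, flat_nil, List.replicate]
    · simp [h, flat_cons, flat_nil, List.replicate]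

lemma mem_flat (P : List (ℕ × ℕ)) : ∀ x ∈ flat P, ∃ p ∈ P, x = p.1 := by
  induction P with
  | nil => simp [flat]
  | cons p t ih =>
    intro x hx
    rw [flat_cons, List.mem_append] at hx
    rcases hx with hx | hx
    · exact ⟨p, by simp, List.eq_of_mem_replicate hx⟩
    · obtain ⟨q, hq, hq2⟩ := ih x hx
      exact ⟨q, by simp [hq], hq2⟩

def hdD : List (ℕ × ℕ) → ℕ
  | [] => 2
  | (b, m) :: _ => if m = b then b else m

def hdOpen : List (ℕ × ℕ) → Prop
  | [] => True
  | (b, m) :: _ => m ≠ b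

lemma merAux_cons (p q : ℕ × ℕ) (r : List (ℕ × ℕ)) :
    merAux p (q :: r) = if p.1 = q.1 then (p.1, p.2 + q.2) :: r else p :: q :: r := rfl

lemma mem_subset246 {x : ℕ} (hx : x ∈ ({2, 4, 6} : Set ℕ)) :
    x ∈ ({1, 2, 4, 6} : Set ℕ) := by
  simp only [Set.mem_insert_iff, Set.mem_singleton_iff] at hx ⊢
  tauto

lemma key : ∀ R : List (ℕ × ℕ), (∀ p ∈ R, inA p) → List.Chain' ne1 R →
    (∀ p ∈ g R, inA p) ∧
    ∃ c t, g R = (hdD R, c) :: t ∧ c ∈ ({2, 4, 6} : Set ℕ) ∧ (hdOpen R → c = 2) := by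
  intro R
  induction R with
  | nil =>
    intro _ _
    have hg : g ([] : List (ℕ × ℕ)) = [(2, 2)] := rfl
    refine ⟨?_, 2, [], hg, by norm_num, fun _ => rfl⟩
    intro p hp
    rw [hg, List.mem_singleton] at hp
    subst hp
    exact ⟨by norm_num, by norm_num⟩
  | cons pn R2 ih =>
    obtain ⟨a, n⟩ := pn
    intro hA hC
    have hin : inA (a, n) := hA _ (by simp)
    have ha : a ∈ ({1, 2, 4, 6} : Set ℕ) := hin.1
    have hn : n ∈ ({2, 4, 6} : Set ℕ) := hin.2
    have hA2 : ∀ p ∈ R2, inA p := fun p hp => hA p (by simp [hp])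
    have hC2 : List.Chain' ne1 R2 := hC.tail
    obtain ⟨hall2, c2, t2, hg2, hc2, hopen2⟩ := ih hA2 hC2
    have hg2' : mer (expand R2 ++ [(2, 2)]) = (hdD R2, c2) :: t2 := hg2
    have hall2' : ∀ p ∈ (hdD R2, c2) :: t2, inA p := by rw [← hg2]; exact hall2
    -- if `a` coincides with the head digit of `g R2`, that head has count 2
    have hc2eq : a = hdD R2 → c2 = 2 := by
      intro hah
      cases R2 with
      | nil => exact hopen2 trivial
      | cons q r =>
        obtain ⟨b, m⟩ := q
        have hab : a ≠ b := (List.isChain_cons_cons.1 hC).1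
        by_cases hmb : m = b
        · exfalso
          apply hab
          rw [hah]
          show (if m = b then b else m) = b
          rw [if_pos hmb]
        · exact hopen2 hmb
    by_cases hna : n = a
    · -- expand contributes [(a,4)]
      have hgR : g ((a, n) :: R2) = merAux (a, 4) ((hdD R2, c2) :: t2) := by
        show mer (expand ((a, n) :: R2) ++ [(2, 2)]) = _
        have : expand ((a, n) :: R2) ++ [(2, 2)]
            = (a, 4) :: (expand R2 ++ [(2, 2)]) := by
          simp [expand, hna]
        rw [this, mer_cons, hg2']
      by_cases hah : a = hdD R2
      · have hc2two := hc2eq hah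
        have hgR2 : g ((a, n) :: R2) = (a, 4 + c2) :: t2 := by
          rw [hgR, merAux_cons, if_pos hah]
        rw [hc2two] at hgR2
        have hhd : hdD ((a, n) :: R2) = a := by simp [hdD, hna]
        refine ⟨?_, 6, t2, by rw [hgR2, hhd], by norm_num, fun h => absurd hna h⟩
        intro p hp
        rw [hgR2, List.mem_cons] at hp
        rcases hp with rfl | hp
        · exact ⟨ha, by norm_num⟩
        · exact hall2' p (by simp [hp])
      · have hgR2 : g ((a, n) :: R2) = (a, 4) :: (hdD R2, c2) :: t2 := by
          rw [hgR, merAux_cons, if_neg hah]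
        have hhd : hdD ((a, n) :: R2) = a := by simp [hdD, hna]
        refine ⟨?_, 4, (hdD R2, c2) :: t2, by rw [hgR2, hhd], by norm_num,
          fun h => absurd hna h⟩
        intro p hp
        rw [hgR2, List.mem_cons] at hp
        rcases hp with rfl | hp
        · exact ⟨ha, by norm_num⟩
        · exact hall2' p hp
    · -- expand contributes [(n,2),(a,2)]
      have hgR : g ((a, n) :: R2)
          = merAux (n, 2) (merAux (a, 2) ((hdD R2, c2) :: t2)) := by
        show mer (expand ((a, n) :: R2) ++ [(2, 2)]) = _
        have : expand ((a, n) :: R2) ++ [(2, 2)]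
            = (n, 2) :: (a, 2) :: (expand R2 ++ [(2, 2)]) := by
          simp [expand, hna]
        rw [this, mer_cons, mer_cons, hg2']
      have hhd : hdD ((a, n) :: R2) = n := by simp [hdD, hna]
      by_cases hah : a = hdD R2
      · have hc2two := hc2eq hah
        have hgR2 : g ((a, n) :: R2) = (n, 2) :: (a, 2 + c2) :: t2 := by
          rw [hgR, merAux_cons, if_pos hah, merAux_cons, if_neg hna]
        rw [hc2two] at hgR2
        refine ⟨?_, 2, (a, 4) :: t2, by rw [hgR2, hhd], by norm_num, fun _ => rfl⟩
        intro p hp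
        rw [hgR2, List.mem_cons, List.mem_cons] at hp
        rcases hp with rfl | rfl | hp
        · exact ⟨mem_subset246 hn, by norm_num⟩
        · exact ⟨ha, by norm_num⟩
        · exact hall2' p (by simp [hp])
      · have hgR2 : g ((a, n) :: R2) = (n, 2) :: (a, 2) :: (hdD R2, c2) :: t2 := by
          rw [hgR, merAux_cons, if_neg hah, merAux_cons, if_neg hna]
        refine ⟨?_, 2, (a, 2) :: (hdD R2, c2) :: t2, by rw [hgR2, hhd], by norm_num,
          fun _ => rfl⟩
        intro p hp
        rw [hgR2, List.mem_cons, List.mem_cons] at hp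
        rcases hp with rfl | rfl | hp
        · exact ⟨mem_subset246 hn, by norm_num⟩
        · exact ⟨ha, by norm_num⟩
        · exact hall2' p hp

end LSAAux

open LSAAux in
/-- For a seed `d ∉ {1,2,4,6}` every term from index 2 on has the form `k ‖ dd`
with `k` satisfying property `P` and not containing `d`. -/
theorem lsa_seq_shape (d : ℕ) (hd9 : d ≤ 9) (hd : d ∉ ({1, 2, 4, 6} : Set ℕ)) :
    ∀ n : ℕ, 2 ≤ n → ∃ k : List ℕ, lsa^[n] [d] = k ++ [d, d] ∧ propP k ∧ d ∉ k := by
  simp only [Set.mem_insert_iff, Set.mem_singleton_iff, not_or] at hd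
  obtain ⟨h1, h2, h4, h6⟩ := hd
  -- main invariant
  have main : ∀ m : ℕ, ∃ R : List (ℕ × ℕ), (∀ p ∈ R, inA p) ∧ List.Chain' ne1 R ∧
      lsa^[m + 2] [d] = flat R ++ [d, d] := by
    intro m
    induction m with
    | zero =>
      refine ⟨[(2, 2), (1, 2), (2, 2)], ?_, ?_, ?_⟩
      · intro p hp
        simp only [List.mem_cons, List.not_mem_nil, or_false] at hp
        rcases hp with h | h | h <;> subst h <;> constructor <;> simp [inA]
      · show List.IsChain ne1 _; simp [ne1]
      · have e1 : lsa [d] = [1, 1, d, d] := by simp [lsa, rle]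
        have e2 : rle [1, 1, d, d] = [(1, 2), (d, 2)] := by
          have : (1 : ℕ) ≠ d := fun h => h1 h.symm
          simp [rle, this]
        show lsa (lsa [d]) = _
        rw [e1, lsa, e2]
        simp [flat, repl, List.replicate]
    | succ m ih =>
      obtain ⟨R, hA, hC, hT⟩ := ih
      have hdnot : ∀ p ∈ R, p.1 ≠ d := by
        intro p hp
        have := (hA p hp).1
        simp only [Set.mem_insert_iff, Set.mem_singleton_iff] at this
        rcases this with h | h | h | h <;> rw [h] <;> omega
      -- rle of current term
      have hflat : flat R ++ [d, d] = flat (R ++ [(d, 2)]) := by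
        rw [flat_append]; rfl
      have hrle : rle (flat (R ++ [(d, 2)])) = R ++ [(d, 2)] := by
        apply rle_flat
        · intro p hp
          rcases List.mem_append.1 hp with h | h
          · have := (hA p h).2
            simp only [Set.mem_insert_iff, Set.mem_singleton_iff] at this
            omega
          · simp only [List.mem_singleton] at h; subst h; norm_num
        · rw [show List.Chain' ne1 (R ++ [(d, 2)]) ↔ _ from List.isChain_append]
          refine ⟨hC, List.isChain_singleton _, ?_⟩
          intro x hx y hy
          have hxR : x ∈ R := List.mem_of_mem_getLast? hx
          simp only [List.head?_cons, Option.mem_some_iff] at hy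
          subst hy
          exact hdnot x hxR
      obtain ⟨hgA, _⟩ := key R hA hC
      refine ⟨g R, hgA, mer_chain' _, ?_⟩
      have : lsa^[m + 1 + 2] [d] = lsa (lsa^[m + 2] [d]) := by
        rw [show m + 1 + 2 = (m + 2) + 1 from rfl, Function.iterate_succ_apply']
      rw [this, hT, hflat, lsa, hrle, List.flatMap_append, flatMap_expand]
      have : flat (expand R) ++ (([(d,2)] : List (ℕ×ℕ)).flatMap fun p => [p.2, p.2, p.1, p.1])
          = flat (expand R ++ [(2,2)]) ++ [d, d] := by
        rw [flat_append]
        simp [flat, repl, List.replicate]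
      rw [this, show flat (expand R ++ [(2,2)]) = flat (g R) from (mer_flat _).symm]
  intro n hn
  obtain ⟨m, rfl⟩ : ∃ m, n = m + 2 := ⟨n - 2, by omega⟩
  obtain ⟨R, hA, hC, hT⟩ := main m
  refine ⟨flat R, hT, ?_, ?_⟩
  · intro p hp
    rw [show flat R = flat R from rfl] at hp
    have hrle : rle (flat R) = R := by
      apply rle_flat _ _ hC
      intro q hq
      have := (hA q hq).2
      simp only [Set.mem_insert_iff, Set.mem_singleton_iff] at this
      omega
    rw [hrle] at hp
    exact hA p hp
  · intro hmem
    obtain ⟨p, hp, hpd⟩ := mem_flat R d hmem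
    have := (hA p hp).1
    simp only [Set.mem_insert_iff, Set.mem_singleton_iff] at this
    subst hpd
    rcases this with h | h | h | h <;> simp_all
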